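/- arXiv:1507.08908 — 7 statements merged into one kernel-verified Lean document; each statement's English description precedes it below -/
import Mathlib

section
/- Let (A,∘,α) be a Hom-Novikov superalgebra. Define on homogeneous elements the supercommutator [x,y]⁻ = x∘y − (−1)^{|x||y|} y∘x, extended bilinearly. Then (A, [·,·]⁻, ∘, α) is a super Hom-Gel'fand-Dorfman bialgebra. -/
noncomputable section

/-- The sign `(-1)^{|x||y|}` attached to parities `i, j` in `ℤ₂`. -/
def sg (i j : ZMod 2) : ℂ := (-1 : ℂ) ^ (i.val * j.val)

variable {A : Type*} [AddCommGroup A] [Module ℂ A]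

/-- `gr` makes `A` into a superspace: `A = A₀ ⊕ A₁`. -/
def IsSupergrading (gr : ZMod 2 → Submodule ℂ A) : Prop :=
  (∀ x : A, ∃ x0 ∈ gr 0, ∃ x1 ∈ gr 1, x = x0 + x1) ∧ (gr 0 ⊓ gr 1 = ⊥)

/-- An even linear map: it preserves the grading. -/
def EvenLin (gr : ZMod 2 → Submodule ℂ A) (α : A →ₗ[ℂ] A) : Prop :=
  ∀ i : ZMod 2, ∀ x ∈ gr i, α x ∈ gr i

/-- An even bilinear map: it adds parities. -/
def EvenBilin (gr : ZMod 2 → Submodule ℂ A) (m : A →ₗ[ℂ] A →ₗ[ℂ] A) : Prop :=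
  ∀ i j : ZMod 2, ∀ x ∈ gr i, ∀ y ∈ gr j, m x y ∈ gr (i + j)

/-- A Hom-Lie superalgebra structure on the superspace `(A, gr)`. -/
def HomLieSuper (gr : ZMod 2 → Submodule ℂ A) (br : A →ₗ[ℂ] A →ₗ[ℂ] A)
    (α : A →ₗ[ℂ] A) : Prop :=
  EvenLin gr α ∧ EvenBilin gr br ∧
  (∀ (i j : ZMod 2), ∀ x ∈ gr i, ∀ y ∈ gr j, br x y = -(sg i j • br y x)) ∧
  (∀ (i j k : ZMod 2), ∀ x ∈ gr i, ∀ y ∈ gr j, ∀ z ∈ gr k,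
    sg i k • br (br x y) (α z) + sg i j • br (br y z) (α x)
      + sg j k • br (br z x) (α y) = 0)

/-- A Hom-Novikov superalgebra structure on the superspace `(A, gr)`. -/
def HomNovikovSuper (gr : ZMod 2 → Submodule ℂ A) (c : A →ₗ[ℂ] A →ₗ[ℂ] A)
    (α : A →ₗ[ℂ] A) : Prop :=
  EvenLin gr α ∧ EvenBilin gr c ∧
  (∀ (i j k : ZMod 2), ∀ x ∈ gr i, ∀ y ∈ gr j, ∀ z ∈ gr k,
    c (c x y) (α z) - c (α x) (c y z) = sg i j • (c (c y x) (α z) - c (α y) (c x z))) ∧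
  (∀ (i j k : ZMod 2), ∀ x ∈ gr i, ∀ y ∈ gr j, ∀ z ∈ gr k,
    c (c x y) (α z) = sg j k • c (c x z) (α y))

/-- A super Hom-Gel'fand-Dorfman bialgebra structure on the superspace `(A, gr)`. -/
def SuperHomGD (gr : ZMod 2 → Submodule ℂ A) (br c : A →ₗ[ℂ] A →ₗ[ℂ] A)
    (α : A →ₗ[ℂ] A) : Prop :=
  HomLieSuper gr br α ∧ HomNovikovSuper gr c α ∧
  (∀ (i j k : ZMod 2), ∀ x ∈ gr i, ∀ y ∈ gr j, ∀ z ∈ gr k,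
    br (c x y) (α z) - sg j k • br (c x z) (α y) + c (br x y) (α z)
      - sg j k • c (br x z) (α y) - c (α x) (br y z) = 0)

/-- A Lie superalgebra structure on the superspace `(A, gr)`. -/
def LieSuper (gr : ZMod 2 → Submodule ℂ A) (br : A →ₗ[ℂ] A →ₗ[ℂ] A) : Prop :=
  EvenBilin gr br ∧
  (∀ (i j : ZMod 2), ∀ x ∈ gr i, ∀ y ∈ gr j, br x y = -(sg i j • br y x)) ∧
  (∀ (i j k : ZMod 2), ∀ x ∈ gr i, ∀ y ∈ gr j, ∀ z ∈ gr k,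
    sg i k • br (br x y) z + sg i j • br (br y z) x + sg j k • br (br z x) y = 0)

/-- A Novikov superalgebra structure on the superspace `(A, gr)`. -/
def NovikovSuper (gr : ZMod 2 → Submodule ℂ A) (c : A →ₗ[ℂ] A →ₗ[ℂ] A) : Prop :=
  EvenBilin gr c ∧
  (∀ (i j k : ZMod 2), ∀ x ∈ gr i, ∀ y ∈ gr j, ∀ z ∈ gr k,
    c (c x y) z - c x (c y z) = sg i j • (c (c y x) z - c y (c x z))) ∧
  (∀ (i j k : ZMod 2), ∀ x ∈ gr i, ∀ y ∈ gr j, ∀ z ∈ gr k,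
    c (c x y) z = sg j k • c (c x z) y)

/-- A super Gel'fand-Dorfman bialgebra structure on the superspace `(A, gr)`. -/
def SuperGD (gr : ZMod 2 → Submodule ℂ A) (br c : A →ₗ[ℂ] A →ₗ[ℂ] A) : Prop :=
  LieSuper gr br ∧ NovikovSuper gr c ∧
  (∀ (i j k : ZMod 2), ∀ x ∈ gr i, ∀ y ∈ gr j, ∀ z ∈ gr k,
    br (c x y) z - sg j k • br (c x z) y + c (br x y) z
      - sg j k • c (br x z) y - c x (br y z) = 0)


lemma sg_symm' (i j : ZMod 2) : sg i j = sg j i := by rw [sg, sg, Nat.mul_comm]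

lemma sg_sq' (i j : ZMod 2) : sg i j * sg i j = 1 := by
  rw [sg, ← pow_add]; exact Even.neg_one_pow ⟨_, rfl⟩

lemma sg_add_left' (i j k : ZMod 2) : sg (i + j) k = sg i k * sg j k := by
  have h : ∀ a : ZMod 2, a = 0 ∨ a = 1 := by decide
  rcases h i with rfl | rfl <;> rcases h j with rfl | rfl <;> rcases h k with rfl | rfl <;>
    norm_num [sg, show ZMod.val (2 : ZMod 2) = 0 from rfl,
      show ZMod.val (1 : ZMod 2) = 1 from rfl, show ZMod.val (0 : ZMod 2) = 0 from rfl]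

/-- If `(A, ∘, α)` is a Hom-Novikov superalgebra and `[x,y]⁻ =
x∘y − (−1)^{|x||y|} y∘x` on homogeneous elements (extended bilinearly), then
`(A, [·,·]⁻, ∘, α)` is a super Hom-Gel'fand-Dorfman bialgebra. -/
theorem superHomGD_of_homNovikovSuper
    {A : Type*} [AddCommGroup A] [Module ℂ A]
    (gr : ZMod 2 → Submodule ℂ A) (hgr : IsSupergrading gr)
    (c : A →ₗ[ℂ] A →ₗ[ℂ] A) (α : A →ₗ[ℂ] A)
    (hNov : HomNovikovSuper gr c α)
    (br : A →ₗ[ℂ] A →ₗ[ℂ] A)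
    (hbr : ∀ (i j : ZMod 2), ∀ x ∈ gr i, ∀ y ∈ gr j,
      br x y = c x y - sg i j • c y x) :
    SuperHomGD gr br c α := by
  obtain ⟨hα, hcE, hN1, hN2⟩ := hNov
  have hbrE : EvenBilin gr br := by
    intro i j x hx y hy
    rw [hbr i j x hx y hy]
    refine sub_mem (hcE i j x hx y hy) (Submodule.smul_mem _ _ ?_)
    rw [show i + j = j + i from add_comm i j]
    exact hcE j i y hy x hx
  refine ⟨⟨hα, hbrE, ?_, ?_⟩, ⟨hα, hcE, hN1, hN2⟩, ?_⟩
  · -- antisymmetry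
    intro i j x hx y hy
    rw [hbr i j x hx y hy, hbr j i y hy x hx, sg_symm' j i]
    have e : (sg i j * sg i j) • c x y = c x y := by rw [sg_sq', one_smul]
    linear_combination (norm := module) -e
  · -- super Hom-Jacobi identity
    intro i j k x hx y hy z hz
    have hαx := hα i x hx; have hαy := hα j y hy; have hαz := hα k z hz
    rw [hbr (i + j) k _ (hbrE i j x hx y hy) _ hαz,
        hbr (j + k) i _ (hbrE j k y hy z hz) _ hαx,
        hbr (k + i) j _ (hbrE k i z hz x hx) _ hαy,
        hbr i j x hx y hy, hbr j k y hy z hz, hbr k i z hz x hx]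
    simp only [map_sub, map_smul, LinearMap.sub_apply, LinearMap.smul_apply]
    rw [sg_add_left' i j k, sg_add_left' j k i, sg_add_left' k i j,
        sg_symm' j i, sg_symm' k i, sg_symm' k j]
    have h1 := hN1 i j k x hx y hy z hz
    have h2 := hN1 j k i y hy z hz x hx
    have h3 := hN1 k i j z hz x hx y hy
    rw [sg_symm' k i] at h3
    have et1 : (sg i k * sg i k) • c (α z) (c x y) = c (α z) (c x y) := by
      rw [sg_sq', one_smul]
    have et2 : (sg i k * sg i k) • c (α z) (c y x) = c (α z) (c y x) := by
      rw [sg_sq', one_smul]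
    have es1 : (sg i j * sg i j) • c (α x) (c y z) = c (α x) (c y z) := by
      rw [sg_sq', one_smul]
    have es2 : (sg i j * sg i j) • c (α x) (c z y) = c (α x) (c z y) := by
      rw [sg_sq', one_smul]
    have eu1 : (sg j k * sg j k) • c (α y) (c z x) = c (α y) (c z x) := by
      rw [sg_sq', one_smul]
    have eu2 : (sg j k * sg j k) • c (α y) (c x z) = c (α y) (c x z) := by
      rw [sg_sq', one_smul]
    linear_combination (norm := module) sg i k • h1 + sg i j • h2 + sg j k • h3
      + (-(sg j k)) • et1 + (sg i j * sg j k) • et2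
      + (-(sg i k)) • es1 + (sg i k * sg j k) • es2
      + (-(sg i j)) • eu1 + (sg i j * sg i k) • eu2
  · -- compatibility
    intro i j k x hx y hy z hz
    have hαx := hα i x hx; have hαy := hα j y hy; have hαz := hα k z hz
    rw [hbr (i + j) k _ (hcE i j x hx y hy) _ hαz,
        hbr (i + k) j _ (hcE i k x hx z hz) _ hαy,
        hbr i j x hx y hy, hbr i k x hx z hz, hbr j k y hy z hz]
    simp only [map_sub, map_smul, LinearMap.sub_apply, LinearMap.smul_apply]
    rw [sg_add_left' i j k, sg_add_left' i k j, sg_symm' k j]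
    have h1 := hN1 i j k x hx y hy z hz
    have h3 := hN1 k i j z hz x hx y hy
    rw [sg_symm' k i] at h3
    have h4 := hN2 i j k x hx y hy z hz
    have et1 : (sg i k * sg i k) • c (c x z) (α y) = c (c x z) (α y) := by
      rw [sg_sq', one_smul]
    have et2 : (sg i k * sg i k) • c (α x) (c z y) = c (α x) (c z y) := by
      rw [sg_sq', one_smul]
    have eu1 : (sg j k * sg j k) • c (α y) (c x z) = c (α y) (c x z) := by
      rw [sg_sq', one_smul]
    linear_combination (norm := module) h4 + h1 + (sg i k * sg j k) • h3
      + sg j k • et1 + sg i j • eu1 + (-(sg j k)) • et2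

end
end

section
/- Let (A,∘) be a Novikov superalgebra and α an even algebra homomorphism of (A,∘), i.e. α(x∘y) = α(x)∘α(y). Define x ∘_α y = α(x)∘α(y). Then (A, ∘_α, α) is a Hom-Novikov superalgebra. -/
noncomputable section

variable {A : Type*} [AddCommGroup A] [Module ℂ A]

/-- If `(A, ∘)` is a Novikov superalgebra and `α` an even algebra
homomorphism of `(A, ∘)`, then `(A, ∘_α, α)` with `x ∘_α y = α(x)∘α(y)` is a
Hom-Novikov superalgebra. -/
theorem homNovikovSuper_of_novikovSuper
    {A : Type*} [AddCommGroup A] [Module ℂ A]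
    (gr : ZMod 2 → Submodule ℂ A) (hgr : IsSupergrading gr)
    (c : A →ₗ[ℂ] A →ₗ[ℂ] A) (hNov : NovikovSuper gr c)
    (α : A →ₗ[ℂ] A) (hα : EvenLin gr α)
    (hhom : ∀ x y : A, α (c x y) = c (α x) (α y)) :
    HomNovikovSuper gr (c.compl₁₂ α α) α := by
  obtain ⟨hEB, hN1, hN2⟩ := hNov
  refine ⟨hα, ?_, ?_, ?_⟩
  · intro i j x hx y hy
    exact hEB i j _ (hα i x hx) _ (hα j y hy)
  · intro i j k x hx y hy z hz
    simp only [LinearMap.compl₁₂_apply, hhom]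
    exact hN1 i j k _ (hα i _ (hα i x hx)) _ (hα j _ (hα j y hy)) _ (hα k _ (hα k z hz))
  · intro i j k x hx y hy z hz
    simp only [LinearMap.compl₁₂_apply, hhom]
    exact hN2 i j k _ (hα i _ (hα i x hx)) _ (hα j _ (hα j y hy)) _ (hα k _ (hα k z hz))

end
end

section
/- Let (A,∘) be a Novikov superalgebra and α an even algebra endomorphism of (A,∘). Define x ∘_α y = α(x)∘α(y) and [x,y]⁻_α = α(x∘y) − (−1)^{|x||y|} α(y∘x) on homogeneous elements. Then (A, [·,·]⁻_α, ∘_α, α) is a super Hom-Gel'fand-Dorfman bialgebra. -/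
noncomputable section

variable {A : Type*} [AddCommGroup A] [Module ℂ A]

private lemma zmod_two_cases : ∀ i : ZMod 2, i = 0 ∨ i = 1 := by decide

private lemma sg_00 : sg 0 0 = 1 := by norm_num [sg]
private lemma sg_01 : sg 0 1 = 1 := by norm_num [sg]
private lemma sg_10 : sg 1 0 = 1 := by norm_num [sg]
private lemma sg_11 : sg 1 1 = -1 := by norm_num [sg, ZMod.val_one]

private lemma zadd_00 : (0 + 0 : ZMod 2) = 0 := by decide
private lemma zadd_01 : (0 + 1 : ZMod 2) = 1 := by decide
private lemma zadd_10 : (1 + 0 : ZMod 2) = 1 := by decide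
private lemma zadd_11 : (1 + 1 : ZMod 2) = 0 := by decide

/-- If `(A, ∘)` is a Novikov superalgebra with an even algebra
endomorphism `α`, then with `x ∘_α y = α(x)∘α(y)` and
`[x,y]⁻_α = α(x∘y) − (−1)^{|x||y|} α(y∘x)` (on homogeneous elements),
`(A, [·,·]⁻_α, ∘_α, α)` is a super Hom-Gel'fand-Dorfman bialgebra. -/
theorem superHomGD_of_novikovSuper_endo
    {A : Type*} [AddCommGroup A] [Module ℂ A]
    (gr : ZMod 2 → Submodule ℂ A) (hgr : IsSupergrading gr)
    (c : A →ₗ[ℂ] A →ₗ[ℂ] A) (hNov : NovikovSuper gr c)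
    (α : A →ₗ[ℂ] A) (hα : EvenLin gr α)
    (hhom : ∀ x y : A, α (c x y) = c (α x) (α y))
    (brα : A →ₗ[ℂ] A →ₗ[ℂ] A)
    (hbrα : ∀ (i j : ZMod 2), ∀ x ∈ gr i, ∀ y ∈ gr j,
      brα x y = α (c x y) - sg i j • α (c y x)) :
    SuperHomGD gr brα (c.compl₁₂ α α) α := by
  obtain ⟨hEB, hN1, hN2⟩ := hNov
  have hαα : ∀ a b : A, c (α a) (α b) = α (c a b) := fun a b => (hhom a b).symm
  have hbm : ∀ (i j : ZMod 2), ∀ x ∈ gr i, ∀ y ∈ gr j, brα x y ∈ gr (i + j) := by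
    intro i j x hx y hy
    rw [hbrα i j x hx y hy]
    refine sub_mem (hα _ _ (hEB i j x hx y hy)) (Submodule.smul_mem _ _ ?_)
    have h := hα _ _ (hEB j i y hy x hx)
    rwa [add_comm j i] at h
  have hcm : ∀ (i j : ZMod 2), ∀ x ∈ gr i, ∀ y ∈ gr j,
      (c.compl₁₂ α α) x y ∈ gr (i + j) := by
    intro i j x hx y hy
    simpa using hEB i j _ (hα i x hx) _ (hα j y hy)
  refine ⟨⟨hα, hbm, ?_, ?_⟩, ⟨hα, hcm, ?_, ?_⟩, ?_⟩
  · -- skew-symmetry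
    intro i j x hx y hy
    rw [hbrα i j x hx y hy, hbrα j i y hy x hx]
    rcases zmod_two_cases i with rfl | rfl <;> rcases zmod_two_cases j with rfl | rfl <;>
      simp only [sg_00, sg_01, sg_10, sg_11] <;> module
  · -- Hom-Jacobi
    intro i j k x hx y hy z hz
    have H1 := congrArg α (congrArg α (hN1 i j k x hx y hy z hz))
    have H2 := congrArg α (congrArg α (hN1 i k j x hx z hz y hy))
    have H3 := congrArg α (congrArg α (hN1 j k i y hy z hz x hx))
    simp only [map_sub, map_smul] at H1 H2 H3
    rw [hbrα (i + j) k _ (hbm i j x hx y hy) _ (hα k z hz),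
        hbrα (j + k) i _ (hbm j k y hy z hz) _ (hα i x hx),
        hbrα (k + i) j _ (hbm k i z hz x hx) _ (hα j y hy),
        hbrα i j x hx y hy, hbrα j k y hy z hz, hbrα k i z hz x hx]
    simp only [map_sub, map_smul, LinearMap.sub_apply, LinearMap.smul_apply, hαα]
    rcases zmod_two_cases i with rfl | rfl <;> rcases zmod_two_cases j with rfl | rfl <;>
      rcases zmod_two_cases k with rfl | rfl <;>
      simp only [zadd_00, zadd_01, zadd_10, zadd_11, sg_00, sg_01, sg_10, sg_11]
        at H1 H2 H3 ⊢
    · linear_combination (norm := module) H1 - H2 + H3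
    · linear_combination (norm := module) H1 - H2 + H3
    · linear_combination (norm := module) H1 - H2 + H3
    · linear_combination (norm := module) H1 + H2 + H3
    · linear_combination (norm := module) H1 - H2 + H3
    · linear_combination (norm := module) H2 + H3 - H1
    · linear_combination (norm := module) H1 - H2 - H3
    · linear_combination (norm := module) -H1 - H2 - H3
  · -- Hom-Novikov identity 1
    intro i j k x hx y hy z hz
    have H1 := congrArg α (congrArg α (hN1 i j k x hx y hy z hz))
    simp only [map_sub, map_smul] at H1
    simp only [LinearMap.compl₁₂_apply, hαα]
    linear_combination (norm := module) H1
  · -- Hom-Novikov identity 2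
    intro i j k x hx y hy z hz
    have H2 := congrArg α (congrArg α (hN2 i j k x hx y hy z hz))
    simp only [map_smul] at H2
    simp only [LinearMap.compl₁₂_apply, hαα]
    linear_combination (norm := module) H2
  · -- compatibility
    intro i j k x hx y hy z hz
    have H1 := congrArg α (congrArg α (hN1 i j k x hx y hy z hz))
    have H2 := congrArg α (congrArg α (hN1 i k j x hx z hz y hy))
    have H4 := congrArg α (congrArg α (hN2 i j k x hx y hy z hz))
    simp only [map_sub, map_smul] at H1 H2 H4
    rw [hbrα (i + j) k _ (hcm i j x hx y hy) _ (hα k z hz),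
        hbrα (i + k) j _ (hcm i k x hx z hz) _ (hα j y hy),
        hbrα i j x hx y hy, hbrα i k x hx z hz, hbrα j k y hy z hz]
    simp only [LinearMap.compl₁₂_apply, map_sub, map_smul, LinearMap.sub_apply,
      LinearMap.smul_apply, hαα]
    rcases zmod_two_cases i with rfl | rfl <;> rcases zmod_two_cases j with rfl | rfl <;>
      rcases zmod_two_cases k with rfl | rfl <;>
      simp only [zadd_00, zadd_01, zadd_10, zadd_11, sg_00, sg_01, sg_10, sg_11]
        at H1 H2 H4 ⊢
    · linear_combination (norm := module) H1 - H2 + H4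
    · linear_combination (norm := module) H1 - H2 + H4
    · linear_combination (norm := module) H1 - H2 + H4
    · linear_combination (norm := module) H1 + H2 + H4
    · linear_combination (norm := module) H1 - H2 + H4
    · linear_combination (norm := module) H1 - H2 + H4
    · linear_combination (norm := module) H1 - H2 + H4
    · linear_combination (norm := module) H1 + H2 + H4


end
end

section
/- Let (A,[·,·],∘) be a super Gel'fand-Dorfman bialgebra and α an even algebra endomorphism of both operations, i.e. α([x,y]) = [α(x),α(y)] and α(x∘y) = α(x)∘α(y). Define x ∘_α y = α(x)∘α(y) and [x,y]_α = [α(x),α(y)]. Then (A, [·,·]_α, ∘_α, α) is a super Hom-Gel'fand-Dorfman bialgebra. -/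
noncomputable section

variable {A : Type*} [AddCommGroup A] [Module ℂ A]

/-- If `(A, [·,·], ∘)` is a super Gel'fand-Dorfman bialgebra with an
even algebra endomorphism `α` of both operations, then with `x ∘_α y = α(x)∘α(y)` and
`[x,y]_α = [α(x),α(y)]`, `(A, [·,·]_α, ∘_α, α)` is a super Hom-Gel'fand-Dorfman
bialgebra. -/
theorem superHomGD_of_superGD_endo
    {A : Type*} [AddCommGroup A] [Module ℂ A]
    (gr : ZMod 2 → Submodule ℂ A) (hgr : IsSupergrading gr)
    (br c : A →ₗ[ℂ] A →ₗ[ℂ] A) (hGD : SuperGD gr br c)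
    (α : A →ₗ[ℂ] A) (hα : EvenLin gr α)
    (hhom₁ : ∀ x y : A, α (br x y) = br (α x) (α y))
    (hhom₂ : ∀ x y : A, α (c x y) = c (α x) (α y)) :
    SuperHomGD gr (br.compl₁₂ α α) (c.compl₁₂ α α) α := by
  obtain ⟨⟨hbrE, hanti, hjac⟩, ⟨hcE, hnov1, hnov2⟩, hcomp⟩ := hGD
  have hα2 : ∀ i : ZMod 2, ∀ x ∈ gr i, α (α x) ∈ gr i :=
    fun i x hx => hα i _ (hα i x hx)
  refine ⟨⟨hα, ?_, ?_, ?_⟩, ⟨hα, ?_, ?_, ?_⟩, ?_⟩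
  · intro i j x hx y hy
    simpa using hbrE i j _ (hα i x hx) _ (hα j y hy)
  · intro i j x hx y hy
    simpa using hanti i j _ (hα i x hx) _ (hα j y hy)
  · intro i j k x hx y hy z hz
    simp only [LinearMap.compl₁₂_apply, hhom₁]
    exact hjac i j k _ (hα2 i x hx) _ (hα2 j y hy) _ (hα2 k z hz)
  · intro i j x hx y hy
    simpa using hcE i j _ (hα i x hx) _ (hα j y hy)
  · intro i j k x hx y hy z hz
    simp only [LinearMap.compl₁₂_apply, hhom₂]
    exact hnov1 i j k _ (hα2 i x hx) _ (hα2 j y hy) _ (hα2 k z hz)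
  · intro i j k x hx y hy z hz
    simp only [LinearMap.compl₁₂_apply, hhom₂]
    exact hnov2 i j k _ (hα2 i x hx) _ (hα2 j y hy) _ (hα2 k z hz)
  · intro i j k x hx y hy z hz
    simp only [LinearMap.compl₁₂_apply, hhom₁, hhom₂]
    exact hcomp i j k _ (hα2 i x hx) _ (hα2 j y hy) _ (hα2 k z hz)

end
end

section
/- Let (A,·,α) be a commutative Hom-associative superalgebra with an even derivation D of (A,·) such that αD = Dα, and let λ ∈ ℂ be fixed. Define x∘y = x·D(y) + λ x·y. Then (A, ∘, α) is a Hom-Novikov superalgebra. -/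
noncomputable section

variable {A : Type*} [AddCommGroup A] [Module ℂ A]

/-- A commutative Hom-associative superalgebra structure on the superspace `(A, gr)`. -/
def CommHomAssocSuper {A : Type*} [AddCommGroup A] [Module ℂ A]
    (gr : ZMod 2 → Submodule ℂ A) (m : A →ₗ[ℂ] A →ₗ[ℂ] A) (α : A →ₗ[ℂ] A) : Prop :=
  EvenLin gr α ∧ EvenBilin gr m ∧
  (∀ (i j : ZMod 2), ∀ x ∈ gr i, ∀ y ∈ gr j, m x y = sg i j • m y x) ∧
  (∀ (i j k : ZMod 2), ∀ x ∈ gr i, ∀ y ∈ gr j, ∀ z ∈ gr k,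
    m (α x) (m y z) = m (m x y) (α z))

/-- `D` is a derivation of the (bilinear) product `m`. -/
def IsDer {A : Type*} [AddCommGroup A] [Module ℂ A]
    (m : A →ₗ[ℂ] A →ₗ[ℂ] A) (D : A →ₗ[ℂ] A) : Prop :=
  ∀ x y : A, D (m x y) = m (D x) y + m x (D y)

/-- If `(A, ·, α)` is a commutative Hom-associative superalgebra with an
even derivation `D` commuting with `α` and `λ ∈ ℂ`, then `x∘y = x·D(y) + λ x·y` makes
`(A, ∘, α)` a Hom-Novikov superalgebra. -/
theorem homNovikovSuper_of_commHomAssoc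
    {A : Type*} [AddCommGroup A] [Module ℂ A]
    (gr : ZMod 2 → Submodule ℂ A) (hgr : IsSupergrading gr)
    (m : A →ₗ[ℂ] A →ₗ[ℂ] A) (α : A →ₗ[ℂ] A)
    (hm : CommHomAssocSuper gr m α)
    (D : A →ₗ[ℂ] A) (hDeven : EvenLin gr D) (hD : IsDer m D)
    (hcomm : ∀ x : A, α (D x) = D (α x)) (lam : ℂ) :
    HomNovikovSuper gr (m.compl₂ D + lam • m) α := by
  obtain ⟨hα, hbil, hc, ha⟩ := hm
  -- `key2 : (x·y)·αz = sg j k • (x·z)·αy`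
  have key2 : ∀ (i j k : ZMod 2), ∀ x ∈ gr i, ∀ y ∈ gr j, ∀ z ∈ gr k,
      m (m x y) (α z) = sg j k • m (m x z) (α y) := by
    intro i j k x hx y hy z hz
    rw [← ha i j k x hx y hy z hz, hc j k y hy z hz, map_smul,
      ha i k j x hx z hz y hy]
  -- `key1 : αx·(y·w) = sg i j • αy·(x·w)`
  have key1 : ∀ (i j k : ZMod 2), ∀ x ∈ gr i, ∀ y ∈ gr j, ∀ w ∈ gr k,
      m (α x) (m y w) = sg i j • m (α y) (m x w) := by
    intro i j k x hx y hy w hw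
    rw [ha i j k x hx y hy w hw, hc i j x hx y hy, map_smul, LinearMap.smul_apply,
      ← ha j i k y hy x hx w hw]
  refine ⟨hα, ?_, ?_, ?_⟩
  · intro i j x hx y hy
    simp only [LinearMap.add_apply, LinearMap.compl₂_apply, LinearMap.smul_apply]
    exact add_mem (hbil i j x hx _ (hDeven j y hy))
      (Submodule.smul_mem _ _ (hbil i j x hx y hy))
  · intro i j k x hx y hy z hz
    have hDy := hDeven j y hy
    have hDz := hDeven k z hz
    have hDDz := hDeven k _ hDz
    simp only [LinearMap.add_apply, LinearMap.compl₂_apply, LinearMap.smul_apply,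
      map_add, map_smul, ← hcomm]
    rw [hD y (D z), hD y z, hD x (D z), hD x z]
    simp only [map_add]
    rw [← ha i j k x hx (D y) hDy (D z) hDz,
      ← ha i j k x hx y hy (D z) hDz,
      ← ha i j k x hx (D y) hDy z hz,
      ← ha i j k x hx y hy z hz,
      ← ha j i k y hy (D x) (hDeven i x hx) (D z) hDz,
      ← ha j i k y hy x hx (D z) hDz,
      ← ha j i k y hy (D x) (hDeven i x hx) z hz,
      ← ha j i k y hy x hx z hz,
      key1 i j k x hx y hy (D (D z)) hDDz,
      key1 i j k x hx y hy (D z) hDz]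
    module
  · intro i j k x hx y hy z hz
    have hDy := hDeven j y hy
    have hDz := hDeven k z hz
    simp only [LinearMap.add_apply, LinearMap.compl₂_apply, LinearMap.smul_apply,
      map_add, map_smul, ← hcomm]
    rw [key2 i j k x hx (D y) hDy (D z) hDz,
      key2 i j k x hx y hy (D z) hDz,
      key2 i j k x hx (D y) hDy z hz,
      key2 i j k x hx y hy z hz]
    module

end
end

section
/- Let (A, ·, [·,·], α) be a Hom-Poisson superalgebra and D an even derivation of (A,·) such that Dα = αD and D([x,y]) = [D(x),y] + [x,D(y)] + λ[x,y] for all x,y ∈ A, where λ ∈ ℂ is fixed. Define x∘y = x·D(y) + λ x·y. Then (A, [·,·], ∘, α) is a super Hom-Gel'fand-Dorfman bialgebra. -/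
noncomputable section

variable {A : Type*} [AddCommGroup A] [Module ℂ A]

/-- A Hom-Poisson superalgebra structure on the superspace `(A, gr)`. -/
def HomPoissonSuper {A : Type*} [AddCommGroup A] [Module ℂ A]
    (gr : ZMod 2 → Submodule ℂ A) (m br : A →ₗ[ℂ] A →ₗ[ℂ] A) (α : A →ₗ[ℂ] A) : Prop :=
  CommHomAssocSuper gr m α ∧ HomLieSuper gr br α ∧
  (∀ (i j k : ZMod 2), ∀ x ∈ gr i, ∀ y ∈ gr j, ∀ z ∈ gr k,
    br (α x) (m y z) = sg i j • m (α y) (br x z) + sg k (i + j) • m (α z) (br x y))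

/-- If `(A, ·, [·,·], α)` is a Hom-Poisson superalgebra and `D` an even
derivation of `(A, ·)` with `Dα = αD` and `D([x,y]) = [D(x),y] + [x,D(y)] + λ[x,y]`,
then with `x∘y = x·D(y) + λ x·y`, `(A, [·,·], ∘, α)` is a super Hom-Gel'fand-Dorfman
bialgebra. -/
theorem superHomGD_of_homPoisson
    {A : Type*} [AddCommGroup A] [Module ℂ A]
    (gr : ZMod 2 → Submodule ℂ A) (hgr : IsSupergrading gr)
    (m br : A →ₗ[ℂ] A →ₗ[ℂ] A) (α : A →ₗ[ℂ] A)
    (hP : HomPoissonSuper gr m br α)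
    (D : A →ₗ[ℂ] A) (hDeven : EvenLin gr D) (hD : IsDer m D)
    (hcomm : ∀ x : A, D (α x) = α (D x)) (lam : ℂ)
    (hDbr : ∀ x y : A, D (br x y) = br (D x) y + br x (D y) + lam • br x y) :
    SuperHomGD gr br (m.compl₂ D + lam • m) α := by
  obtain ⟨⟨hαe, hme, hmc, hma⟩, hLie, hLeib⟩ := hP
  have hbe := hLie.2.1
  have hba := hLie.2.2.1
  have hD' : ∀ x y : A, D (m x y) = m (D x) y + m x (D y) := hD
  have zv0 : ((0 : ZMod 2)).val = 0 := rfl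
  have zv1 : ((1 : ZMod 2)).val = 1 := rfl
  have zv2 : ((2 : ZMod 2)).val = 0 := rfl
  have z01 : ∀ t : ZMod 2, t = 0 ∨ t = 1 := by decide
  -- the bracket acts as a (signed) derivation on products, in the first slot
  have L3 : ∀ (a b c₀ : ZMod 2), ∀ u ∈ gr a, ∀ v ∈ gr b, ∀ w ∈ gr c₀,
      br (m u v) (α w) = m (α u) (br v w) + sg b a • m (α v) (br u w) := by
    intro a b c₀ u hu v hv w hw
    have h1 := hba (a + b) c₀ (m u v) (hme a b u hu v hv) (α w) (hαe c₀ w hw)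
    have h2 := hLeib c₀ a b w hw u hu v hv
    have h3 : m (α u) (br w v) = -(sg c₀ b • m (α u) (br v w)) := by
      rw [hba c₀ b w hw v hv]; simp
    have h4 : m (α v) (br w u) = -(sg c₀ a • m (α v) (br u w)) := by
      rw [hba c₀ a w hw u hu]; simp
    rw [h1, h2, h3, h4]
    clear h1 h2 h3 h4
    rcases z01 a with rfl | rfl <;> rcases z01 b with rfl | rfl <;> rcases z01 c₀ with rfl | rfl <;>
      norm_num [sg, zv0, zv1, zv2] <;> module
  refine ⟨hLie, ⟨hLie.1, ?_, ?_, ?_⟩, ?_⟩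
  · -- the new product is even
    intro i j x hx y hy
    simp only [LinearMap.add_apply, LinearMap.smul_apply, LinearMap.compl₂_apply]
    exact Submodule.add_mem _ (hme i j x hx (D y) (hDeven j y hy))
      (Submodule.smul_mem _ _ (hme i j x hx y hy))
  · -- left Hom-Novikov identity
    intro i j k x hx y hy z hz
    have hDx := hDeven i x hx
    have hDy := hDeven j y hy
    have hDz := hDeven k z hz
    have hDDz := hDeven k (D z) hDz
    have hconv : ∀ u ∈ gr k, m (α y) (m x u) = sg j i • m (α x) (m y u) := by
      intro u hu
      rw [hma j i k y hy x hx u hu, hmc j i y hy x hx, map_smul,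
        LinearMap.smul_apply, hma i j k x hx y hy u hu]
    simp only [LinearMap.add_apply, LinearMap.smul_apply, LinearMap.compl₂_apply,
      hcomm, hD', map_add, map_smul]
    rw [← hma i j k x hx (D y) hDy (D z) hDz, ← hma i j k x hx y hy (D z) hDz,
      ← hma i j k x hx (D y) hDy z hz, ← hma i j k x hx y hy z hz,
      ← hma j i k y hy (D x) hDx (D z) hDz, ← hma j i k y hy x hx (D z) hDz,
      ← hma j i k y hy (D x) hDx z hz, ← hma j i k y hy x hx z hz,
      hconv (D (D z)) hDDz, hconv (D z) hDz]
    rcases z01 i with rfl | rfl <;> rcases z01 j with rfl | rfl <;> norm_num [sg, zv0, zv1, zv2] <;> module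
  · -- right Hom-Novikov identity
    intro i j k x hx y hy z hz
    have hDy := hDeven j y hy
    have hDz := hDeven k z hz
    simp only [LinearMap.add_apply, LinearMap.smul_apply, LinearMap.compl₂_apply,
      hcomm, map_add, map_smul]
    rw [← hma i j k x hx (D y) hDy (D z) hDz, ← hma i j k x hx y hy (D z) hDz,
      ← hma i j k x hx (D y) hDy z hz, ← hma i j k x hx y hy z hz,
      ← hma i k j x hx (D z) hDz (D y) hDy, ← hma i k j x hx z hz (D y) hDy,
      ← hma i k j x hx (D z) hDz y hy, ← hma i k j x hx z hz y hy,
      hmc j k (D y) hDy (D z) hDz, hmc j k y hy (D z) hDz,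
      hmc j k (D y) hDy z hz, hmc j k y hy z hz]
    simp only [map_smul]
    rcases z01 j with rfl | rfl <;> rcases z01 k with rfl | rfl <;> norm_num [sg, zv0, zv1, zv2] <;> module
  · -- compatibility identity
    intro i j k x hx y hy z hz
    have hDy := hDeven j y hy
    have hDz := hDeven k z hz
    have hbxy := hbe i j x hx y hy
    have hbxz := hbe i k x hx z hz
    have rA := L3 i j k x hx (D y) hDy z hz
    have rB := L3 i j k x hx y hy z hz
    have rC := L3 i k j x hx (D z) hDz y hy
    have rD := L3 i k j x hx z hz y hy
    have rE := hmc (i + j) k (br x y) hbxy (α (D z)) (hαe k (D z) hDz)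
    have rF := hmc (i + j) k (br x y) hbxy (α z) (hαe k z hz)
    have rG := hmc (i + k) j (br x z) hbxz (α (D y)) (hαe j (D y) hDy)
    have rH := hmc (i + k) j (br x z) hbxz (α y) (hαe j y hy)
    have rI := hba k j z hz y hy
    have rJ := hba j k y hy (D z) hDz
    simp only [LinearMap.add_apply, LinearMap.smul_apply, LinearMap.compl₂_apply,
      hcomm, hDbr, map_add, map_smul]
    rw [rA, rB, rC, rD, rE, rF, rG, rH, rI, rJ]
    simp only [map_neg, map_smul, smul_neg]
    clear rA rB rC rD rE rF rG rH rI rJ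
    rcases z01 i with rfl | rfl <;> rcases z01 j with rfl | rfl <;> rcases z01 k with rfl | rfl <;>
      norm_num [sg, zv0, zv1, zv2] <;> module

end
end

section
/- Let (L,[·,·],α) be a Hom-Lie superalgebra with an even derivation d (i.e. d([x,y]) = [d(x),y] + [x,d(y)]) such that dα = αd. Define x⋆'y = [x,d(y)]. Then (L, [·,·], ⋆', α) is a super Hom-Gel'fand-Dorfman bialgebra if and only if, for all homogeneous x,y,z ∈ L: [d([x,y]), d(α(z))] − [α(x), d([y,d(z)])] + (−1)^{|x||y|}[α(y), d([x,d(z)])] = 0, and [d(x),d(y)] ∈ Z(α(L)). -/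
noncomputable section

variable {A : Type*} [AddCommGroup A] [Module ℂ A]

private lemma leib_aux {L : Type*} [AddCommGroup L] [Module ℂ L]
    (gr : ZMod 2 → Submodule ℂ L) (br : L →ₗ[ℂ] L →ₗ[ℂ] L) (α : L →ₗ[ℂ] L)
    (hL : HomLieSuper gr br α) :
    ∀ (i j k : ZMod 2), ∀ x ∈ gr i, ∀ y ∈ gr j, ∀ z ∈ gr k,
      br (br x y) (α z) = br (α x) (br y z) - sg i j • br (α y) (br x z) := by
  obtain ⟨hα, hB, hsk, hJ⟩ := hL
  intro i j k x hx y hy z hz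
  have J := hJ i j k x hx y hy z hz
  have S1 : br (br y z) (α x) = -(sg (j+k) i • br (α x) (br y z)) :=
    hsk (j+k) i (br y z) (hB j k y hy z hz) (α x) (hα i x hx)
  have S2 : br z x = -(sg k i • br x z) := hsk k i z hz x hx
  have S3 : br (br x z) (α y) = -(sg (i+k) j • br (α y) (br x z)) :=
    hsk (i+k) j _ (hB i k x hx z hz) _ (hα j y hy)
  rw [S1, S2] at J
  simp only [map_neg, map_smul, LinearMap.neg_apply, LinearMap.smul_apply, S3] at J
  rcases (show ∀ a : ZMod 2, a = 0 ∨ a = 1 by decide) i with rfl | rfl <;>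
    rcases (show ∀ a : ZMod 2, a = 0 ∨ a = 1 by decide) j with rfl | rfl <;>
    rcases (show ∀ a : ZMod 2, a = 0 ∨ a = 1 by decide) k with rfl | rfl <;>
    norm_num [sg, show (ZMod.val (1 : ZMod 2)) = 1 from rfl,
      show (ZMod.val (2 : ZMod 2)) = 0 from rfl] at J ⊢ <;>
    first
      | linear_combination (norm := module) J
      | linear_combination (norm := module) -J

private lemma leib_aux2 {L : Type*} [AddCommGroup L] [Module ℂ L]
    (gr : ZMod 2 → Submodule ℂ L) (br : L →ₗ[ℂ] L →ₗ[ℂ] L) (α : L →ₗ[ℂ] L)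
    (hL : HomLieSuper gr br α) :
    ∀ (i j k : ZMod 2), ∀ x ∈ gr i, ∀ y ∈ gr j, ∀ z ∈ gr k,
      br (br x y) (α z) - sg j k • br (br x z) (α y) = br (α x) (br y z) := by
  intro i j k x hx y hy z hz
  have E := leib_aux gr br α hL i j k x hx y hy z hz
  obtain ⟨hα, hB, hsk, hJ⟩ := hL
  have S3 : br (br x z) (α y) = -(sg (i+k) j • br (α y) (br x z)) :=
    hsk (i+k) j _ (hB i k x hx z hz) _ (hα j y hy)
  rw [E, S3]
  rcases (show ∀ a : ZMod 2, a = 0 ∨ a = 1 by decide) i with rfl | rfl <;>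
    rcases (show ∀ a : ZMod 2, a = 0 ∨ a = 1 by decide) j with rfl | rfl <;>
    rcases (show ∀ a : ZMod 2, a = 0 ∨ a = 1 by decide) k with rfl | rfl <;>
    norm_num [sg, show (ZMod.val (1 : ZMod 2)) = 1 from rfl,
      show (ZMod.val (2 : ZMod 2)) = 0 from rfl] <;>
    module

/-- For a Hom-Lie superalgebra `(L, [·,·], α)` with an even derivation
`d` commuting with `α`, and `x⋆'y = [x, d(y)]`, the tuple `(L, [·,·], ⋆', α)` is a super
Hom-Gel'fand-Dorfman bialgebra iff for all homogeneous `x,y,z`: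
`[d([x,y]), d(α(z))] − [α(x), d([y,d(z)])] + (−1)^{|x||y|}[α(y), d([x,d(z)])] = 0`
and `[d(x),d(y)] ∈ Z(α(L))`. -/
theorem superHomGD_star'_derivation_iff
    {L : Type*} [AddCommGroup L] [Module ℂ L]
    (gr : ZMod 2 → Submodule ℂ L) (hgr : IsSupergrading gr)
    (br : L →ₗ[ℂ] L →ₗ[ℂ] L) (α : L →ₗ[ℂ] L)
    (hL : HomLieSuper gr br α)
    (d : L →ₗ[ℂ] L) (hdeven : EvenLin gr d)
    (hder : ∀ x y : L, d (br x y) = br (d x) y + br x (d y))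
    (hdα : ∀ x : L, d (α x) = α (d x)) :
    SuperHomGD gr br (br.compl₂ d) α ↔
      ((∀ (i j k : ZMod 2), ∀ x ∈ gr i, ∀ y ∈ gr j, ∀ z ∈ gr k,
          br (d (br x y)) (d (α z)) - br (α x) (d (br y (d z)))
            + sg i j • br (α y) (d (br x (d z))) = 0) ∧
       (∀ (i j : ZMod 2), ∀ x ∈ gr i, ∀ y ∈ gr j, ∀ w : L,
          br (br (d x) (d y)) (α w) = 0)) := by
  have hα := hL.1
  have hB := hL.2.1
  have hsk := hL.2.2.1
  have l2 := leib_aux2 gr br α hL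
  -- Bridge between Eq1 and the first Novikov identity
  have key1 : ∀ (i j k : ZMod 2), ∀ x ∈ gr i, ∀ y ∈ gr j, ∀ z ∈ gr k,
      br (d (br x y)) (d (α z)) - br (α x) (d (br y (d z)))
          + sg i j • br (α y) (d (br x (d z)))
        = (br (br x (d y)) (d (α z)) - br (α x) (d (br y (d z))))
          - sg i j • (br (br y (d x)) (d (α z)) - br (α y) (d (br x (d z)))) := by
    intro i j k x hx y hy z hz
    have hd : d (br x y) = br (d x) y + br x (d y) := hder x y
    have hs : br (d x) y = -(sg i j • br y (d x)) := hsk i j (d x) (hdeven i x hx) y hy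
    rw [hd, hs]
    simp only [map_add, map_neg, map_smul, LinearMap.add_apply, LinearMap.neg_apply,
      LinearMap.smul_apply]
    module
  -- Bridge for the second Novikov identity
  have key2 : ∀ (i j k : ZMod 2), ∀ x ∈ gr i, ∀ y ∈ gr j, ∀ z ∈ gr k,
      br (br x (d y)) (α (d z)) - sg j k • br (br x (d z)) (α (d y))
        = br (α x) (br (d y) (d z)) :=
    fun i j k x hx y hy z hz =>
      l2 i j k x hx (d y) (hdeven j y hy) (d z) (hdeven k z hz)
  constructor
  · rintro ⟨-, hNov, -⟩
    constructor
    · intro i j k x hx y hy z hz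
      have N1 := hNov.2.2.1 i j k x hx y hy z hz
      simp only [LinearMap.compl₂_apply] at N1
      rw [key1 i j k x hx y hy z hz, N1, sub_self]
    · intro i j x hx y hy w
      have hhom : ∀ (p : ZMod 2), ∀ u ∈ gr p, br (br (d x) (d y)) (α u) = 0 := by
        intro p u hu
        have N2 := hNov.2.2.2 p i j u hu x hx y hy
        simp only [LinearMap.compl₂_apply] at N2
        rw [hdα y, hdα x] at N2
        have K := key2 p i j u hu x hx y hy
        rw [N2, sub_self] at K
        have S : br (br (d x) (d y)) (α u)
            = -(sg (i+j) p • br (α u) (br (d x) (d y))) :=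
          hsk (i+j) p _ (hB i j (d x) (hdeven i x hx) (d y) (hdeven j y hy)) _
            (hα p u hu)
        rw [S, ← K, smul_zero, neg_zero]
      obtain ⟨w0, hw0, w1, hw1, rfl⟩ := hgr.1 w
      rw [map_add, map_add, hhom 0 w0 hw0, hhom 1 w1 hw1, add_zero]
  · rintro ⟨e1, e2⟩
    refine ⟨hL, ⟨hα, ?_, ?_, ?_⟩, ?_⟩
    · intro i j x hx y hy
      simp only [LinearMap.compl₂_apply]
      exact hB i j x hx (d y) (hdeven j y hy)
    · intro i j k x hx y hy z hz
      simp only [LinearMap.compl₂_apply]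
      have h1 := e1 i j k x hx y hy z hz
      rw [key1 i j k x hx y hy z hz, sub_eq_zero] at h1
      exact h1
    · intro i j k x hx y hy z hz
      simp only [LinearMap.compl₂_apply]
      rw [hdα z, hdα y]
      have K := key2 i j k x hx y hy z hz
      have Z0 : br (br (d y) (d z)) (α x) = 0 := e2 j k y hy z hz x
      have S : br (α x) (br (d y) (d z))
          = -(sg i (j+k) • br (br (d y) (d z)) (α x)) :=
        hsk i (j+k) _ (hα i x hx) _ (hB j k (d y) (hdeven j y hy) (d z) (hdeven k z hz))
      rw [S, Z0, smul_zero, neg_zero] at K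
      rw [sub_eq_zero] at K
      exact K
    · intro i j k x hx y hy z hz
      simp only [LinearMap.compl₂_apply]
      rw [hdα z, hdα y, hder y z]
      have K1 := l2 i j k x hx (d y) (hdeven j y hy) z hz
      have K2 := l2 i j k x hx y hy (d z) (hdeven k z hz)
      simp only [map_add]
      linear_combination (norm := module) K1 + K2


end
end
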